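/- Let C ⊆ A be countable, let n ∈ ℕ, and let f₀, f₁ ∈ Pₙ satisfy f₀ c = f₁ c for all c ∈ C. Suppose that for every t : Fin n → Bool having t k = false for some k, the sets {a ∈ A \ C : f₀ a = t} and {a ∈ A \ C : f₁ a = t} have the same cardinality. Then there exists a bijection Λ : A → A with Λ c = c for all c ∈ C such that f₁ ∘ Λ = f₀ (equivalently, f₁ = f₀ ∘ Λ⁻¹). -/

import Mathlib

open Classical in
/-- Classify elements of `A` as either in `C` or in a fiber of `f` outside `C`. -/
noncomputable def classifyEquiv {A τ : Type*} (C : Set A) (f : A → τ) :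
    A ≃ (C ⊕ Σ t : τ, {a : A // a ∉ C ∧ f a = t}) where
  toFun a := if h : a ∈ C then Sum.inl ⟨a, h⟩ else Sum.inr ⟨f a, a, h, rfl⟩
  invFun x := match x with
    | Sum.inl c => (c : A)
    | Sum.inr s => (s.2 : A)
  left_inv a := by by_cases h : a ∈ C <;> simp [h]
  right_inv x := by
    rcases x with ⟨a, h⟩ | ⟨t, a, h, ht⟩
    · simp [h]
    · subst ht; simp [h]


/-- `Pcond A n` is the set of forcing conditions of length `n`: functions
`f : A → (Fin n → Bool)` such that the set of `a` where some coordinate of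
`f a` is `false` is countable, and every `t : Fin n → Bool` is attained by
`f` on an infinite set. -/
def Pcond (A : Type*) (n : ℕ) : Set (A → Fin n → Bool) :=
  {f | {a : A | ∃ k : Fin n, f a k = false}.Countable ∧
       ∀ t : Fin n → Bool, {a : A | f a = t}.Infinite}

/-- The forcing `P = ⋃ₙ Pₙ`: pairs `(n, f)` with `f ∈ Pcond A n`. -/
structure ForcingCond (A : Type*) where
  n : ℕ
  f : A → Fin n → Bool
  mem : f ∈ Pcond A n

/-- `p` is stronger than (or equal to) `q`: `q.n ≤ p.n` and `p.f` agrees with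
`q.f` on all coordinates `k < q.n`. -/
def Stronger {A : Type*} (p q : ForcingCond A) : Prop :=
  ∃ h : q.n ≤ p.n, ∀ (a : A) (k : Fin q.n), p.f a (Fin.castLE h k) = q.f a k

/-- If `f₀, f₁ ∈ Pₙ` agree on a countable set `C` and, for every pattern
`t : Fin n → Bool` taking the value `false` somewhere, the fibers of `f₀` and
`f₁` over `t` outside `C` are equinumerous, then there is a bijection
`Λ : A → A` fixing `C` pointwise with `f₁ ∘ Λ = f₀`. -/
theorem exists_permutation_matching (A : Type*)
    (hA : ¬ (Set.univ : Set A).Countable)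
    (C : Set A) (hC : C.Countable) (n : ℕ)
    (f₀ f₁ : A → Fin n → Bool) (hf₀ : f₀ ∈ Pcond A n) (hf₁ : f₁ ∈ Pcond A n)
    (hagree : ∀ c ∈ C, f₀ c = f₁ c)
    (hcard : ∀ t : Fin n → Bool, (∃ k : Fin n, t k = false) →
      Cardinal.mk {a : A // a ∉ C ∧ f₀ a = t} =
        Cardinal.mk {a : A // a ∉ C ∧ f₁ a = t}) :
    ∃ Λ : A ≃ A, (∀ c ∈ C, Λ c = c) ∧ ∀ a : A, f₁ (Λ a) = f₀ a := by
  classical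
  have hAnc : ¬ Countable A := by rwa [Set.countable_univ_iff] at hA
  have haleph : (Cardinal.aleph0 : Cardinal) < Cardinal.mk A := by
    rw [← not_le]
    intro h
    exact hAnc (Cardinal.mk_le_aleph0_iff.mp h)
  -- cocountable sets have full cardinality
  have cocount : ∀ S : Set A, Sᶜ.Countable → Cardinal.mk S = Cardinal.mk A := by
    intro S hS
    have h1 : Cardinal.mk S ≤ Cardinal.mk A := Cardinal.mk_set_le S
    have h2 : Cardinal.mk A ≤ Cardinal.mk S + Cardinal.mk (Sᶜ : Set A) := by
      rw [Cardinal.mk_sum_compl]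
    have h3 : Cardinal.mk (Sᶜ : Set A) ≤ Cardinal.aleph0 := hS.le_aleph0
    have h4 : Cardinal.aleph0 ≤ Cardinal.mk S := by
      by_contra hlt
      push_neg at hlt
      have : Cardinal.mk A ≤ Cardinal.aleph0 + Cardinal.aleph0 :=
        h2.trans (add_le_add hlt.le h3)
      rw [Cardinal.aleph0_add_aleph0] at this
      exact absurd this (not_le.mpr haleph)
    refine le_antisymm h1 ?_
    calc Cardinal.mk A ≤ Cardinal.mk S + Cardinal.mk (Sᶜ : Set A) := h2
      _ ≤ Cardinal.mk S + Cardinal.aleph0 := add_le_add_right h3 _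
      _ = Cardinal.mk S := Cardinal.add_eq_left h4 (h4.trans le_rfl) |>.symm ▸
          (Cardinal.add_eq_left h4 (le_refl _ |>.trans h4))
  have fibEquiv : ∀ t : Fin n → Bool,
      Nonempty ({a : A // a ∉ C ∧ f₀ a = t} ≃ {a : A // a ∉ C ∧ f₁ a = t}) := by
    intro t
    by_cases ht : ∃ k : Fin n, t k = false
    · exact Cardinal.eq.mp (hcard t ht)
    · push_neg at ht
      have htt : ∀ k, t k = true := fun k => by
        cases h : t k
        · exact absurd h (ht k)
        · rfl
      have key : ∀ f : A → Fin n → Bool, f ∈ Pcond A n →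
          Cardinal.mk {a : A // a ∉ C ∧ f a = t} = Cardinal.mk A := by
        intro f hf
        have hsub : {a : A | a ∉ C ∧ f a = t}ᶜ ⊆
            C ∪ {a : A | ∃ k : Fin n, f a k = false} := by
          intro a ha
          by_cases hc : a ∈ C
          · exact Or.inl hc
          · right
            have hne : f a ≠ t := fun he => ha ⟨hc, he⟩
            obtain ⟨k, hk⟩ := Function.ne_iff.mp hne
            refine ⟨k, ?_⟩
            rw [htt k] at hk
            exact Bool.not_eq_true _ |>.mp hk
        exact cocount _ ((hC.union hf.1).mono hsub)
      exact Cardinal.eq.mp ((key f₀ hf₀).trans (key f₁ hf₁).symm)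
  set E : ∀ t : Fin n → Bool,
      {a : A // a ∉ C ∧ f₀ a = t} ≃ {a : A // a ∉ C ∧ f₁ a = t} :=
    fun t => (fibEquiv t).some with hE
  refine ⟨(classifyEquiv C f₀).trans ((Equiv.sumCongr (Equiv.refl C)
      (Equiv.sigmaCongrRight E)).trans (classifyEquiv C f₁).symm), ?_, ?_⟩
  · intro c hc
    simp [classifyEquiv, hc]
  · intro a
    by_cases h : a ∈ C
    · have : f₀ a = f₁ a := hagree a h
      simp [classifyEquiv, h, ← this]
    · simp only [classifyEquiv, Equiv.trans_apply, Equiv.sumCongr_apply,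
        Equiv.coe_fn_mk, dif_neg h, Sum.map_inr, Equiv.sigmaCongrRight_apply,
        Equiv.coe_fn_symm_mk, Sum.elim_inr]
      exact (E (f₀ a) ⟨a, h, rfl⟩).2.2
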